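/- Let (n_k)_{k≥1} be strictly increasing positive integers with n_1 ≤ N, and for a positive integer N let i(N) be the unique index with n_{i(N)} ≤ N < n_{i(N)+1}. Suppose there are positive constants and a real p ∈ (1,2] with n_{k+1} ≥ n_k^p for all k, and let σ_N² := Σ_{k=1}^{i(N)} v_k(N) + Σ_{k>i(N)} w_k(N), where v_k(N) ≥ c·N for k ≤ i(N) and w_k(N) ≤ C·N²/n_k for k > i(N), with also v_k(N) ≤ C·N for k ≤ i(N). Then there exist constants c', C' > 0 (independent of N) with c'·N·i(N) ≤ σ_N² ≤ C'·N·i(N). -/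

import Mathlib

open Finset

lemma geom_aux (r : ℝ) (h0 : 0 ≤ r) (h1 : r < 1) (M : ℕ) :
    ∑ i ∈ Finset.range M, r ^ i ≤ 1/(1-r) := by
  rw [geom_sum_eq (ne_of_lt h1)]
  have e : (r^M-1)/(r-1) = (1-r^M)/(1-r) := by
    rw [div_eq_div_iff (by linarith) (by linarith)]; ring
  rw [e]
  gcongr
  · nlinarith [pow_nonneg h0 M]

/-- abstract form of Proposition 6: with `n_{k+1} ≥ n_k^p`,
`v_k(N) ≍ N` for `1 ≤ k ≤ i(N)` and `0 ≤ w_k(N) ≤ C N²/n_k` for `k > i(N)`,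
the quantity `σ_N² = Σ_{k=1}^{i(N)} v_k(N) + Σ_{k>i(N)} w_k(N)` satisfies
`σ_N² ≍ N·i(N)`. -/
theorem stmt17 (p : ℝ) (hp1 : 1 < p) (hp2 : p ≤ 2)
    (n : ℕ → ℕ) (hmono : StrictMono n) (hpos : ∀ k, 1 ≤ k → 1 ≤ n k)
    (hrec : ∀ k, 1 ≤ k → ((n k : ℝ)) ^ p ≤ (n (k + 1) : ℝ))
    (i : ℕ → ℕ) (hi1 : ∀ N, n 1 ≤ N → 1 ≤ i N)
    (hiN : ∀ N, n 1 ≤ N → n (i N) ≤ N ∧ N < n (i N + 1))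
    (v w : ℕ → ℕ → ℝ) (c C : ℝ) (hc : 0 < c) (hC : 0 < C)
    (hv : ∀ N, n 1 ≤ N → ∀ k, 1 ≤ k → k ≤ i N →
      c * (N : ℝ) ≤ v k N ∧ v k N ≤ C * (N : ℝ))
    (hw : ∀ N, n 1 ≤ N → ∀ k, i N < k →
      0 ≤ w k N ∧ w k N ≤ C * (N : ℝ) ^ 2 / (n k : ℝ))
    (σ2 : ℕ → ℝ)
    (hσ2 : ∀ N, σ2 N = (∑ k ∈ Finset.Icc 1 (i N), v k N) +
      ∑' k : ℕ, (if i N < k then w k N else 0)) :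
    ∃ c' C' : ℝ, 0 < c' ∧ 0 < C' ∧ ∀ N, n 1 ≤ N →
      c' * ((N : ℝ) * (i N : ℝ)) ≤ σ2 N ∧ σ2 N ≤ C' * ((N : ℝ) * (i N : ℝ)) := by
  have hp0 : (0:ℝ) < p - 1 := by linarith
  set s : ℝ := (2:ℝ) ^ (p - 1) with hs_def
  have hs1 : 1 < s := by
    rw [hs_def]
    exact (Real.one_lt_rpow_iff_of_pos (by norm_num)).2 (Or.inl ⟨by norm_num, hp0⟩)
  have hs0 : 0 < s := by linarith
  set t : ℝ := s⁻¹ with ht_def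
  have ht0 : 0 < t := inv_pos.2 hs0
  have ht1 : t < 1 := inv_lt_one_of_one_lt₀ hs1
  have h1t : 0 < 1 - t := by linarith
  refine ⟨c, C + C * (1/(1-t)), hc, by positivity, ?_⟩
  intro N hN
  obtain ⟨hle, hlt⟩ := hiN N hN
  have hi1' : 1 ≤ i N := hi1 N hN
  have hN1 : 1 ≤ N := le_trans (hpos 1 le_rfl) hN
  have hNR : (1:ℝ) ≤ (N:ℝ) := by exact_mod_cast hN1
  set m : ℕ := i N + 1 with hm_def
  -- growth claim
  have hB : ∀ j : ℕ, ((N:ℝ) + 1) * s ^ j ≤ (n (m + j) : ℝ) := by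
    intro j
    induction j with
    | zero =>
      simp only [pow_zero, mul_one, Nat.add_zero]
      have : N + 1 ≤ n m := hlt
      exact_mod_cast this
    | succ j ih =>
      have hnk1 : 1 ≤ m + j := by omega
      have hrec' : ((n (m + j) : ℝ)) ^ p ≤ (n (m + j + 1) : ℝ) := hrec _ hnk1
      have hx0 : (0:ℝ) ≤ ((N:ℝ) + 1) * s ^ j := by positivity
      have key : ((N:ℝ) + 1) * s ^ (j + 1) ≤ (((N:ℝ) + 1) * s ^ j) ^ p := by
        rw [Real.mul_rpow (by linarith) (by positivity)]
        have h1 : ((N:ℝ) + 1) * s ≤ ((N:ℝ) + 1) ^ p := by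
          have : ((N:ℝ) + 1) ^ p = ((N:ℝ)+1) ^ (1 + (p-1)) := by ring_nf
          rw [this, Real.rpow_add (by linarith), Real.rpow_one]
          gcongr
          rw [hs_def]
          exact Real.rpow_le_rpow (by norm_num) (by linarith) (le_of_lt hp0)
        have h2 : (s:ℝ) ^ j ≤ (s ^ j : ℝ) ^ p := by
          rw [← Real.rpow_natCast s j, ← Real.rpow_mul hs0.le]
          exact Real.rpow_le_rpow_of_exponent_le hs1.le (by nlinarith [Nat.cast_nonneg (α := ℝ) j])
        calc ((N:ℝ) + 1) * s ^ (j + 1) = (((N:ℝ) + 1) * s) * s ^ j := by ring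
          _ ≤ ((N:ℝ) + 1) ^ p * (s ^ j) ^ p := by
              apply mul_le_mul h1 h2 (by positivity) (by positivity)
      calc ((N:ℝ) + 1) * s ^ (j + 1) ≤ (((N:ℝ) + 1) * s ^ j) ^ p := key
        _ ≤ ((n (m + j) : ℝ)) ^ p := Real.rpow_le_rpow hx0 ih (by linarith)
        _ ≤ (n (m + j + 1) : ℝ) := hrec'
  -- tail term bound
  have hterm : ∀ k, m ≤ k → w k N ≤ C * (N:ℝ) * t ^ (k - m) := by
    intro k hk
    have hik : i N < k := by omega
    obtain ⟨hw0, hw1⟩ := hw N hN k hik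
    have hBk : ((N:ℝ) + 1) * s ^ (k - m) ≤ (n k : ℝ) := by
      have := hB (k - m)
      rwa [Nat.add_sub_cancel' hk] at this
    have hnk0 : (0:ℝ) < (n k : ℝ) := lt_of_lt_of_le (by positivity) hBk
    refine le_trans hw1 ?_
    rw [div_le_iff₀ hnk0]
    have hts : t ^ (k - m) * s ^ (k - m) = 1 := by
      rw [ht_def, ← mul_pow, inv_mul_cancel₀ (ne_of_gt hs0), one_pow]
    calc C * (N:ℝ) ^ 2 ≤ C * (N:ℝ) * ((N:ℝ) + 1) := by nlinarith
      _ = C * (N:ℝ) * t ^ (k - m) * (((N:ℝ) + 1) * s ^ (k - m)) := by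
          rw [show C * (N:ℝ) * t ^ (k - m) * (((N:ℝ) + 1) * s ^ (k - m))
              = C * (N:ℝ) * ((N:ℝ) + 1) * (t ^ (k - m) * s ^ (k - m)) from by ring, hts, mul_one]
      _ ≤ C * (N:ℝ) * t ^ (k - m) * (n k : ℝ) := by
          apply mul_le_mul_of_nonneg_left hBk (by positivity)
  -- sum over range bound
  set G : ℕ → ℝ := fun k => if m ≤ k then C * (N:ℝ) * t ^ (k - m) else 0 with hG_def
  have hG0 : ∀ k, 0 ≤ G k := by
    intro k; rw [hG_def]; dsimp only; split
    · positivity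
    · exact le_refl 0
  have hgG : ∀ k, (if i N < k then w k N else 0) ≤ G k := by
    intro k
    rw [hG_def]; dsimp only
    by_cases hk : m ≤ k
    · rw [if_pos (by omega : i N < k), if_pos hk]; exact hterm k hk
    · rw [if_neg (by omega : ¬ i N < k), if_neg hk]
  have hg0 : ∀ k, 0 ≤ (if i N < k then w k N else 0) := by
    intro k; split
    · exact (hw N hN k (by assumption)).1
    · exact le_refl 0
  have hsumG : ∀ M, ∑ k ∈ Finset.range M, G k ≤ C * (N:ℝ) * (1/(1-t)) := by
    intro M
    have hsplit : ∑ k ∈ Finset.range M, G k ≤ ∑ k ∈ Finset.range (m + M), G k := by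
      apply Finset.sum_le_sum_of_subset_of_nonneg
      · exact Finset.range_subset_range.2 (by omega)
      · intro k _ _; exact hG0 k
    refine le_trans hsplit ?_
    rw [Finset.range_eq_Ico, ← Finset.sum_Ico_consecutive G (Nat.zero_le m) (by omega : m ≤ m + M)]
    have hz : ∑ k ∈ Finset.Ico 0 m, G k = 0 := by
      apply Finset.sum_eq_zero
      intro k hk
      rw [Finset.mem_Ico] at hk
      rw [hG_def]; exact if_neg (by omega)
    rw [hz, zero_add, Finset.sum_Ico_eq_sum_range]
    have he : ∀ j ∈ Finset.range (m + M - m), G (m + j) = C * (N:ℝ) * t ^ j := by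
      intro j _
      rw [hG_def]; dsimp only
      rw [if_pos (by omega), Nat.add_sub_cancel_left]
    rw [Finset.sum_congr rfl he, ← Finset.mul_sum]
    apply mul_le_mul_of_nonneg_left (geom_aux t ht0.le ht1 _) (by positivity)
  have hsum : ∀ M, ∑ k ∈ Finset.range M, (if i N < k then w k N else 0) ≤ C * (N:ℝ) * (1/(1-t)) := by
    intro M
    exact le_trans (Finset.sum_le_sum (fun k _ => hgG k)) (hsumG M)
  have htail_le : (∑' k : ℕ, (if i N < k then w k N else 0)) ≤ C * (N:ℝ) * (1/(1-t)) :=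
    Real.tsum_le_of_sum_range_le hg0 hsum
  have htail_nn : 0 ≤ (∑' k : ℕ, (if i N < k then w k N else 0)) := tsum_nonneg hg0
  -- head bounds
  have hcard : (Finset.Icc 1 (i N)).card = i N := by rw [Nat.card_Icc]; omega
  have hhead_lb : c * (N:ℝ) * (i N : ℝ) ≤ ∑ k ∈ Finset.Icc 1 (i N), v k N := by
    have := Finset.card_nsmul_le_sum (Finset.Icc 1 (i N)) (fun k => v k N) (c * (N:ℝ))
      (fun k hk => by
        rw [Finset.mem_Icc] at hk
        exact (hv N hN k hk.1 hk.2).1)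
    rw [hcard, nsmul_eq_mul] at this
    linarith [this]
  have hhead_ub : ∑ k ∈ Finset.Icc 1 (i N), v k N ≤ C * (N:ℝ) * (i N : ℝ) := by
    have := Finset.sum_le_card_nsmul (Finset.Icc 1 (i N)) (fun k => v k N) (C * (N:ℝ))
      (fun k hk => by
        rw [Finset.mem_Icc] at hk
        exact (hv N hN k hk.1 hk.2).2)
    rw [hcard, nsmul_eq_mul] at this
    linarith [this]
  have hiR : (1:ℝ) ≤ (i N : ℝ) := by exact_mod_cast hi1'
  rw [hσ2 N]
  constructor
  · calc c * ((N:ℝ) * (i N : ℝ)) = c * (N:ℝ) * (i N : ℝ) := by ring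
      _ ≤ ∑ k ∈ Finset.Icc 1 (i N), v k N := hhead_lb
      _ ≤ _ := le_add_of_nonneg_right htail_nn
  · have h2 : C * (N:ℝ) * (1/(1-t)) ≤ C * (1/(1-t)) * ((N:ℝ) * (i N : ℝ)) := by
      have hpos1 : 0 < C * (N:ℝ) * (1/(1-t)) := by positivity
      nlinarith
    calc (∑ k ∈ Finset.Icc 1 (i N), v k N) + ∑' k : ℕ, (if i N < k then w k N else 0)
        ≤ C * (N:ℝ) * (i N : ℝ) + C * (N:ℝ) * (1/(1-t)) := add_le_add hhead_ub htail_le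
      _ ≤ C * ((N:ℝ) * (i N : ℝ)) + C * (1/(1-t)) * ((N:ℝ) * (i N : ℝ)) :=
          add_le_add (le_of_eq (by ring)) h2
      _ = (C + C * (1/(1-t))) * ((N:ℝ) * (i N : ℝ)) := by ring
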